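/- Let w_b be the solution on [0,b] of r w = (μ - α((1-x)^+))w' + (σ²/2)w'' with w'(b) = 1, w''(b) = 0 and b > 1. Assume w_b(0) = 0 (so that w_b is increasing and positive on (0,b)). Then w_b'(x) > 1 and w_b''(x) < 0 for all x in [1, b). -/

import Mathlib

open Set Filter Topology

theorem stmt_3 (μ σ r : ℝ) (hσ : 0 < σ) (hr : 0 < r) (hμr : r < μ)
    (α : ℝ → ℝ) (hα : ContDiff ℝ 1 α) (hαconv : ConvexOn ℝ (Ici 0) α)
    (hαmono : StrictMonoOn α (Ici 0)) (hα0 : α 0 = 0)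
    (hα' : ∀ x ≥ (0:ℝ), r ≤ deriv α x)
    (b : ℝ) (hb : 1 < b) (w : ℝ → ℝ) (hw : ContDiff ℝ 2 w)
    (hode : ∀ x ∈ Icc (0:ℝ) b,
      r * w x = (μ - α (max (1 - x) 0)) * deriv w x + σ ^ 2 / 2 * deriv (deriv w) x)
    (hw'b : deriv w b = 1) (hw''b : deriv (deriv w) b = 0) (hw0 : w 0 = 0)
    (hmono : StrictMonoOn w (Icc 0 b)) (hpos : ∀ x ∈ Ioo (0:ℝ) b, 0 < w x) :
    ∀ x ∈ Ico (1:ℝ) b, 1 < deriv w x ∧ deriv (deriv w) x < 0 := by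
  have hσ2 : (0:ℝ) < σ ^ 2 := by positivity
  -- regularity
  have hw2 : Differentiable ℝ w ∧ ContDiff ℝ 1 (deriv w) := by
    have h := (contDiff_succ_iff_deriv (n := 1)).mp (by exact_mod_cast hw)
    exact ⟨h.1, h.2.2⟩
  have hwd : Differentiable ℝ w := hw2.1
  have hw1 : ContDiff ℝ 1 (deriv w) := hw2.2
  have hwd1 : Differentiable ℝ (deriv w) := hw1.differentiable one_ne_zero
  set k : ℝ := 2 * μ / σ ^ 2 with hk
  set f : ℝ → ℝ := fun x => r * w x - μ * deriv w x with hfdef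
  set g : ℝ → ℝ := fun x => Real.exp (k * x) * f x with hgdef
  have hfd : ∀ x, HasDerivAt f (r * deriv w x - μ * deriv (deriv w) x) x := fun x =>
    ((hwd x).hasDerivAt.const_mul r).sub (((hwd1 x).hasDerivAt).const_mul μ)
  have hgd : ∀ x, HasDerivAt g
      (Real.exp (k * x) * (k * f x + (r * deriv w x - μ * deriv (deriv w) x))) x := by
    intro x
    have h1 : HasDerivAt (fun y => Real.exp (k * y)) (Real.exp (k * x) * k) x := by
      have h0 := ((hasDerivAt_id x).const_mul k).exp
      simp only [id, mul_one] at h0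
      exact h0
    have := h1.mul (hfd x)
    exact this.congr_deriv (by ring)
  -- the ODE on [1, b]
  have hode1 : ∀ x ∈ Icc (1:ℝ) b, deriv (deriv w) x = 2 / σ ^ 2 * f x := by
    intro x hx
    have h := hode x ⟨by linarith [hx.1], hx.2⟩
    rw [max_eq_right (by linarith [hx.1] : (1:ℝ) - x ≤ 0), hα0] at h
    simp only [hfdef]
    field_simp
    linarith
  -- f b = 0
  have hfb : f b = 0 := by
    have h := hode1 b ⟨hb.le, le_rfl⟩
    rw [hw''b] at h
    have h2σ : (2:ℝ) / σ ^ 2 ≠ 0 := by positivity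
    field_simp at h
    linarith
  have hgb : g b = 0 := by simp [hgdef, hfb]
  -- derivative of w is nonnegative on [1, b)
  have hw'nonneg : ∀ x ∈ Ico (1:ℝ) b, 0 ≤ deriv w x := by
    intro x hx
    have hder := (hwd x).hasDerivAt
    rw [hasDerivAt_iff_tendsto_slope] at hder
    have hsub : Ioo x b ⊆ {x}ᶜ := fun y hy => hy.1.ne'
    have htend : Tendsto (slope w x) (𝓝[Ioo x b] x) (𝓝 (deriv w x)) :=
      hder.mono_left (nhdsWithin_mono x hsub)
    have hne : (𝓝[Ioo x b] x).NeBot := by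
      apply mem_closure_iff_nhdsWithin_neBot.mp
      rw [closure_Ioo (ne_of_lt hx.2)]
      exact ⟨le_rfl, hx.2.le⟩
    refine ge_of_tendsto htend ?_
    filter_upwards [self_mem_nhdsWithin] with y hy
    have hxm : x ∈ Icc (0:ℝ) b := ⟨by linarith [hx.1], hx.2.le⟩
    have hym : y ∈ Icc (0:ℝ) b := ⟨by linarith [hx.1, hy.1], hy.2.le⟩
    have hlt : w x < w y := hmono hxm hym hy.1
    have : 0 < slope w x y := by
      rw [slope_def_field]
      exact div_pos (by linarith) (by linarith [hy.1])
    exact this.le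
  have hgcont : Continuous g := by
    apply Continuous.mul
    · exact Real.continuous_exp.comp (continuous_const.mul continuous_id)
    · exact (continuous_const.mul hwd.continuous).sub (continuous_const.mul hwd1.continuous)
  -- key: deriv of g on (1,b)
  have hgderiv : ∀ x ∈ Ioo (1:ℝ) b, deriv g x = Real.exp (k * x) * (r * deriv w x) := by
    intro x hx
    rw [(hgd x).deriv, hode1 x ⟨hx.1.le, hx.2.le⟩]
    congr 1
    rw [hk]
    field_simp
    ring
  -- g is monotone on [1,b]
  have hgmono : MonotoneOn g (Icc 1 b) := by
    apply monotoneOn_of_deriv_nonneg (convex_Icc 1 b) hgcont.continuousOn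
    · exact fun x _ => ((hgd x).differentiableAt).differentiableWithinAt
    · intro x hx
      rw [interior_Icc] at hx
      rw [hgderiv x hx]
      have := hw'nonneg x ⟨hx.1.le, hx.2⟩
      positivity
  -- hence f ≤ 0 on [1,b], so w'' ≤ 0 there
  have hfle : ∀ x ∈ Icc (1:ℝ) b, f x ≤ 0 := by
    intro x hx
    have := hgmono hx ⟨hb.le, le_rfl⟩ hx.2
    rw [hgb] at this
    simp only [hgdef] at this
    have hexp : 0 < Real.exp (k * x) := Real.exp_pos _
    by_contra hcon
    push_neg at hcon
    nlinarith [mul_pos hexp hcon]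
  have hw''le : ∀ x ∈ Icc (1:ℝ) b, deriv (deriv w) x ≤ 0 := by
    intro x hx
    rw [hode1 x hx]
    have h1 := hfle x hx
    have h2 : (0:ℝ) < 2 / σ ^ 2 := by positivity
    first
    | exact mul_nonpos_iff.mpr (Or.inl ⟨h2.le, h1⟩)
    | exact mul_nonpos_iff.mpr (Or.inr ⟨h2.le, h1⟩)
  -- w' is antitone on [1,b], hence ≥ 1 there
  have hw'anti : AntitoneOn (deriv w) (Icc 1 b) := by
    apply antitoneOn_of_deriv_nonpos (convex_Icc 1 b) (hwd1.continuous.continuousOn)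
    · exact hwd1.differentiableOn
    · intro x hx
      rw [interior_Icc] at hx
      exact hw''le x ⟨hx.1.le, hx.2.le⟩
  have hw'ge1 : ∀ x ∈ Icc (1:ℝ) b, 1 ≤ deriv w x := by
    intro x hx
    have := hw'anti hx ⟨hb.le, le_rfl⟩ hx.2
    rwa [hw'b] at this
  -- g is strictly monotone on [1,b]
  have hgstrict : StrictMonoOn g (Icc 1 b) := by
    apply strictMonoOn_of_deriv_pos (convex_Icc 1 b) hgcont.continuousOn
    intro x hx
    rw [interior_Icc] at hx
    rw [hgderiv x hx]
    have h1 : (1:ℝ) ≤ deriv w x := hw'ge1 x ⟨hx.1.le, hx.2.le⟩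
    exact mul_pos (Real.exp_pos _) (mul_pos hr (by linarith))
  -- conclusion
  intro x hx
  have hflt : f x < 0 := by
    have := hgstrict ⟨hx.1, hx.2.le⟩ ⟨hb.le, le_rfl⟩ hx.2
    rw [hgb] at this
    simp only [hgdef] at this
    have hexp : 0 < Real.exp (k * x) := Real.exp_pos _
    by_contra hcon
    push_neg at hcon
    nlinarith [mul_nonneg hexp.le hcon]
  have hw''lt : deriv (deriv w) x < 0 := by
    rw [hode1 x ⟨hx.1, hx.2.le⟩]
    exact mul_neg_of_pos_of_neg (by positivity) hflt
  refine ⟨?_, hw''lt⟩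
  -- deriv w strictly antitone on [x, b]
  have hanti : StrictAntiOn (deriv w) (Icc x b) := by
    apply strictAntiOn_of_deriv_neg (convex_Icc x b) (hwd1.continuous.continuousOn)
    intro y hy
    rw [interior_Icc] at hy
    have hy1 : y ∈ Ico (1:ℝ) b := ⟨le_of_lt (lt_of_le_of_lt hx.1 hy.1), hy.2⟩
    have hfy : f y < 0 := by
      have := hgstrict ⟨hy1.1, hy1.2.le⟩ ⟨hb.le, le_rfl⟩ hy1.2
      rw [hgb] at this
      simp only [hgdef] at this
      have hexp : 0 < Real.exp (k * y) := Real.exp_pos _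
      by_contra hcon
      push_neg at hcon
      nlinarith [mul_nonneg hexp.le hcon]
    rw [hode1 y ⟨hy1.1, hy1.2.le⟩]
    exact mul_neg_of_pos_of_neg (by positivity) hfy
  have := hanti ⟨le_rfl, hx.2.le⟩ ⟨hx.2.le, le_rfl⟩ hx.2
  rwa [hw'b] at this
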